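/- Let m_B, m_E be positive integers, K_{B,1}, K_{B,2}, K_{E,1}, K_{E,2} > 0, ρ_{E,1}, ρ_{E,2} > 0, c₁, c₂ > 0 real, and p_B, p_E ∈ [0,1]. For s > 0, let F_B^{(s)} be the ARS CDF with parameters (p_B, m_B, K_{B,1}, K_{B,2}, c₁·s, c₂·s), and let f_E^{ARS} be the ARS PDF with parameters (p_E, m_E, K_{E,1}, K_{E,2}, ρ_{E,1}, ρ_{E,2}). Then I₂(s) = ∫₀^∞ ln(1+γ)·f_E^{ARS}(γ)·F_B^{(s)}(γ) dγ satisfies lim_{s→∞} I₂(s) / log₂(s) = 0. -/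

import Mathlib

open MeasureTheory Filter Finset Real

/-- Coefficients `B_n(m,K)` of the integer-parameter Rician shadowed model. -/
noncomputable def Bcoef (m : ℕ) (K : ℝ) (n : ℕ) : ℝ :=
  ((m - 1).choose n : ℝ) * ((m : ℝ) / (K + m)) ^ n * (K / (K + m)) ^ (m - 1 - n)

/-- Integer-parameter Rician shadowed PDF with parameters `(m, K, ρ)`. -/
noncomputable def rsPDF (m : ℕ) (K ρ : ℝ) (γ : ℝ) : ℝ :=
  ∑ n ∈ Finset.range m,
    Bcoef m K n * γ ^ (m - n - 1) * Real.exp (-γ / ρ) /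
      (ρ ^ (m - n) * ((m - n - 1).factorial : ℝ))

/-- Integer-parameter Rician shadowed CDF with parameters `(m, K, ρ)`. -/
noncomputable def rsCDF (m : ℕ) (K ρ : ℝ) (γ : ℝ) : ℝ :=
  ∑ j ∈ Finset.range m,
    Bcoef m K j *
      (1 - Real.exp (-γ / ρ) *
        ∑ k ∈ Finset.range (m - j), γ ^ k / (ρ ^ k * (k.factorial : ℝ)))

/-- Alternate Rician Shadowed (ARS) PDF with parameters `(p, m, K₁, K₂, ρ₁, ρ₂)`. -/
noncomputable def arsPDF (p : ℝ) (m : ℕ) (K₁ K₂ ρ₁ ρ₂ : ℝ) (γ : ℝ) : ℝ :=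
  p * rsPDF m K₁ ρ₁ γ + (1 - p) * rsPDF m K₂ ρ₂ γ

/-- Alternate Rician Shadowed (ARS) CDF with parameters `(p, m, K₁, K₂, ρ₁, ρ₂)`. -/
noncomputable def arsCDF (p : ℝ) (m : ℕ) (K₁ K₂ ρ₁ ρ₂ : ℝ) (γ : ℝ) : ℝ :=
  p * rsCDF m K₁ ρ₁ γ + (1 - p) * rsCDF m K₂ ρ₂ γ

lemma Bcoef_nonneg (m : ℕ) {K : ℝ} (hK : 0 < K) (n : ℕ) : 0 ≤ Bcoef m K n := by
  unfold Bcoef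
  have h : (0:ℝ) < K + m := by positivity
  positivity

lemma Bcoef_sum {m : ℕ} (hm : 0 < m) {K : ℝ} (hK : 0 < K) :
    ∑ n ∈ Finset.range m, Bcoef m K n = 1 := by
  have h : (0:ℝ) < K + m := by positivity
  have hab : (m:ℝ)/(K+m) + K/(K+m) = 1 := by field_simp; ring
  have hr : m = (m-1)+1 := (Nat.succ_pred_eq_of_pos hm).symm
  calc ∑ n ∈ Finset.range m, Bcoef m K n
      = ∑ n ∈ Finset.range ((m-1)+1),
          ((m:ℝ)/(K+m)) ^ n * (K/(K+m)) ^ (m-1-n) * ((m-1).choose n : ℝ) := by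
        rw [← hr]; exact Finset.sum_congr rfl fun n _ => by unfold Bcoef; ring
    _ = ((m:ℝ)/(K+m) + K/(K+m)) ^ (m-1) := (add_pow _ _ _).symm
    _ = 1 := by rw [hab, one_pow]

lemma exp_mul_sum_le {γ ρ : ℝ} (hγ : 0 ≤ γ) (hρ : 0 < ρ) (N : ℕ) :
    Real.exp (-γ/ρ) * ∑ k ∈ Finset.range N, γ ^ k / (ρ ^ k * (k.factorial : ℝ)) ≤ 1 := by
  have h1 : ∑ k ∈ Finset.range N, γ ^ k / (ρ ^ k * (k.factorial : ℝ))
      = ∑ k ∈ Finset.range N, (γ/ρ) ^ k / (k.factorial : ℝ) := by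
    refine Finset.sum_congr rfl fun k _ => ?_
    rw [div_pow, div_div]
  rw [h1]
  have h2 : ∑ k ∈ Finset.range N, (γ/ρ) ^ k / (k.factorial : ℝ) ≤ Real.exp (γ/ρ) :=
    Real.sum_le_exp_of_nonneg (by positivity) N
  calc Real.exp (-γ/ρ) * ∑ k ∈ Finset.range N, (γ/ρ) ^ k / (k.factorial : ℝ)
      ≤ Real.exp (-γ/ρ) * Real.exp (γ/ρ) := by
        exact mul_le_mul_of_nonneg_left h2 (Real.exp_pos _).le
    _ = 1 := by rw [← Real.exp_add]; ring_nf; exact Real.exp_zero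

lemma sum_exp_nonneg {γ ρ : ℝ} (hγ : 0 ≤ γ) (hρ : 0 < ρ) (N : ℕ) :
    0 ≤ Real.exp (-γ/ρ) * ∑ k ∈ Finset.range N, γ ^ k / (ρ ^ k * (k.factorial : ℝ)) := by
  have : 0 ≤ ∑ k ∈ Finset.range N, γ ^ k / (ρ ^ k * (k.factorial : ℝ)) :=
    Finset.sum_nonneg fun k _ => by positivity
  positivity

lemma rsCDF_mem {m : ℕ} (hm : 0 < m) {K ρ γ : ℝ} (hK : 0 < K) (hρ : 0 < ρ) (hγ : 0 ≤ γ) :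
    rsCDF m K ρ γ ∈ Set.Icc (0:ℝ) 1 := by
  constructor
  · refine Finset.sum_nonneg fun j _ => mul_nonneg (Bcoef_nonneg m hK j) ?_
    have := exp_mul_sum_le hγ hρ (m - j)
    linarith
  · have hle : rsCDF m K ρ γ ≤ ∑ j ∈ Finset.range m, Bcoef m K j := by
      refine Finset.sum_le_sum fun j _ => ?_
      have h1 := sum_exp_nonneg hγ hρ (m - j)
      have h2 := Bcoef_nonneg m hK j
      nlinarith
    rw [Bcoef_sum hm hK] at hle
    exact hle

lemma rsPDF_nonneg (m : ℕ) {K ρ γ : ℝ} (hK : 0 < K) (hρ : 0 < ρ) (hγ : 0 ≤ γ) :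
    0 ≤ rsPDF m K ρ γ := by
  refine Finset.sum_nonneg fun n _ => ?_
  have h := Bcoef_nonneg m hK n
  positivity

lemma int_pow_exp (n : ℕ) {ρ : ℝ} (hρ : 0 < ρ) :
    MeasureTheory.IntegrableOn (fun x : ℝ => x ^ n * Real.exp (-x / ρ)) (Set.Ioi 0) := by
  have h := integrableOn_rpow_mul_exp_neg_mul_rpow (s := (n:ℝ)) (p := 1) (b := 1/ρ)
    (lt_of_lt_of_le neg_one_lt_zero (Nat.cast_nonneg n)) one_pos (by positivity)
  refine h.congr_fun (fun x hx => ?_) measurableSet_Ioi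
  beta_reduce
  rw [Real.rpow_one, Real.rpow_natCast]
  congr 1
  ring

lemma integrable_id_mul_rsPDF (m : ℕ) {K ρ : ℝ} (hρ : 0 < ρ) :
    MeasureTheory.IntegrableOn (fun γ : ℝ => γ * rsPDF m K ρ γ) (Set.Ioi 0) := by
  have h : ∀ γ : ℝ, γ * rsPDF m K ρ γ = ∑ n ∈ Finset.range m,
      (Bcoef m K n / (ρ ^ (m - n) * ((m - n - 1).factorial : ℝ))) *
        (γ ^ (m - n - 1 + 1) * Real.exp (-γ / ρ)) := by
    intro γ
    unfold rsPDF
    rw [Finset.mul_sum]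
    exact Finset.sum_congr rfl fun n _ => by rw [pow_succ]; ring
  simp only [h]
  exact MeasureTheory.integrable_finset_sum _ fun n _ =>
    ((int_pow_exp (m - n - 1 + 1) hρ).const_mul _)

lemma integrable_id_mul_arsPDF (m : ℕ) {p K₁ K₂ ρ₁ ρ₂ : ℝ} (hρ₁ : 0 < ρ₁) (hρ₂ : 0 < ρ₂) :
    MeasureTheory.IntegrableOn (fun γ : ℝ => γ * arsPDF p m K₁ K₂ ρ₁ ρ₂ γ) (Set.Ioi 0) := by
  have h : ∀ γ : ℝ, γ * arsPDF p m K₁ K₂ ρ₁ ρ₂ γ =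
      p * (γ * rsPDF m K₁ ρ₁ γ) + (1 - p) * (γ * rsPDF m K₂ ρ₂ γ) := by
    intro γ; unfold arsPDF; ring
  simp only [h]
  exact ((integrable_id_mul_rsPDF m hρ₁).const_mul _).add
    ((integrable_id_mul_rsPDF m hρ₂).const_mul _)

/-- The component `S_{∞,2}` of the high-SNR slope of the ASC equals `0`. -/
theorem asc_slope_component_I2 (mB mE : ℕ) (hmB : 0 < mB) (hmE : 0 < mE)
    (KB1 KB2 KE1 KE2 : ℝ) (hKB1 : 0 < KB1) (hKB2 : 0 < KB2)
    (hKE1 : 0 < KE1) (hKE2 : 0 < KE2)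
    (ρE1 ρE2 c1 c2 : ℝ) (hρE1 : 0 < ρE1) (hρE2 : 0 < ρE2)
    (hc1 : 0 < c1) (hc2 : 0 < c2)
    (pB pE : ℝ) (hpB : pB ∈ Set.Icc (0 : ℝ) 1) (hpE : pE ∈ Set.Icc (0 : ℝ) 1) :
    Filter.Tendsto
      (fun s : ℝ =>
        (∫ γ in Set.Ioi (0 : ℝ),
            Real.log (1 + γ) * arsPDF pE mE KE1 KE2 ρE1 ρE2 γ *
              arsCDF pB mB KB1 KB2 (c1 * s) (c2 * s) γ) / Real.logb 2 s)
      Filter.atTop (nhds 0) := by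
  obtain ⟨hpB0, hpB1⟩ := hpB
  obtain ⟨hpE0, hpE1⟩ := hpE
  have hg : MeasureTheory.IntegrableOn
      (fun γ : ℝ => γ * arsPDF pE mE KE1 KE2 ρE1 ρE2 γ) (Set.Ioi 0) :=
    integrable_id_mul_arsPDF mE hρE1 hρE2
  set M : ℝ := ∫ γ in Set.Ioi (0:ℝ), γ * arsPDF pE mE KE1 KE2 ρE1 ρE2 γ with hMdef
  apply squeeze_zero_norm' (a := fun s : ℝ => M / Real.logb 2 s)
  · filter_upwards [eventually_ge_atTop (2:ℝ)] with s hs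
    have hs0 : (0:ℝ) < s := by linarith
    have hlb : 0 < Real.logb 2 s := Real.logb_pos one_lt_two (by linarith)
    have hnum : ‖∫ γ in Set.Ioi (0:ℝ),
        Real.log (1 + γ) * arsPDF pE mE KE1 KE2 ρE1 ρE2 γ *
          arsCDF pB mB KB1 KB2 (c1 * s) (c2 * s) γ‖ ≤ M := by
      refine MeasureTheory.norm_integral_le_of_norm_le hg ?_
      filter_upwards [MeasureTheory.ae_restrict_mem measurableSet_Ioi] with γ hγ
      have hγ0 : (0:ℝ) < γ := hγ
      have hf : 0 ≤ arsPDF pE mE KE1 KE2 ρE1 ρE2 γ := by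
        unfold arsPDF
        have h1 := rsPDF_nonneg mE hKE1 hρE1 hγ0.le
        have h2 := rsPDF_nonneg mE hKE2 hρE2 hγ0.le
        nlinarith
      have hF1 := rsCDF_mem hmB hKB1 (mul_pos hc1 hs0) hγ0.le (γ := γ)
      have hF2 := rsCDF_mem hmB hKB2 (mul_pos hc2 hs0) hγ0.le (γ := γ)
      have hF : arsCDF pB mB KB1 KB2 (c1 * s) (c2 * s) γ ∈ Set.Icc (0:ℝ) 1 := by
        obtain ⟨ha1, ha2⟩ := hF1
        obtain ⟨hb1, hb2⟩ := hF2
        unfold arsCDF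
        constructor
        · nlinarith
        · nlinarith
      have hlog0 : 0 ≤ Real.log (1 + γ) := Real.log_nonneg (by linarith)
      have hlog : Real.log (1 + γ) ≤ γ := by
        have := Real.log_le_sub_one_of_pos (show (0:ℝ) < 1 + γ by linarith)
        linarith
      rw [Real.norm_eq_abs]
      calc |Real.log (1 + γ) * arsPDF pE mE KE1 KE2 ρE1 ρE2 γ *
            arsCDF pB mB KB1 KB2 (c1 * s) (c2 * s) γ|
          = Real.log (1 + γ) * arsPDF pE mE KE1 KE2 ρE1 ρE2 γ *
            |arsCDF pB mB KB1 KB2 (c1 * s) (c2 * s) γ| := by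
            rw [abs_mul, abs_of_nonneg (mul_nonneg hlog0 hf)]
        _ ≤ Real.log (1 + γ) * arsPDF pE mE KE1 KE2 ρE1 ρE2 γ * 1 := by
            have : |arsCDF pB mB KB1 KB2 (c1 * s) (c2 * s) γ| ≤ 1 :=
              abs_le.mpr ⟨by linarith [hF.1], hF.2⟩
            exact mul_le_mul_of_nonneg_left this (mul_nonneg hlog0 hf)
        _ = Real.log (1 + γ) * arsPDF pE mE KE1 KE2 ρE1 ρE2 γ := mul_one _
        _ ≤ γ * arsPDF pE mE KE1 KE2 ρE1 ρE2 γ :=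
            mul_le_mul_of_nonneg_right hlog hf
    rw [norm_div, Real.norm_eq_abs (Real.logb 2 s), abs_of_pos hlb]
    exact div_le_div_of_nonneg_right hnum hlb.le |>.trans_eq rfl
  · exact Tendsto.div_atTop tendsto_const_nhds (Real.tendsto_logb_atTop one_lt_two)
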